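/- arXiv:1010.2232 — 3 statements merged into one kernel-verified Lean document; each statement's English description precedes it below -/
import Mathlib

section
/- Let p ≥ 2 be an integer and let p₁, q₁ be relatively prime positive integers with pq₁ − p₁ > 0. Define s_j(q/p') = ⌊jp'/q⌋_* − ⌊(j−1)p'/q⌋_* where ⌊x⌋_* is the greatest integer strictly less than x. Then for every j with 1 < j < q₁, s_j(q₁/(pq₁−p₁)) = p − s_j(q₁/p₁). -/
/-- `⌊x⌋_*`, the greatest integer strictly smaller than the real number `x`
(equals `⌈x⌉ - 1`). -/
noncomputable def fstar (x : ℝ) : ℤ := ⌈x⌉ - 1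

lemma ceil_div_of_not_dvd (a q : ℤ) (hq : 0 < q) (h : ¬ q ∣ a) :
    ⌈(a : ℝ) / q⌉ = ⌊(a : ℝ) / q⌋ + 1 := by
  have hq' : (q : ℝ) ≠ 0 := by exact_mod_cast hq.ne'
  have hne : ((a : ℝ) / q) ≠ (⌊(a : ℝ) / q⌋ : ℝ) := by
    intro he
    apply h
    refine ⟨⌊(a : ℝ) / q⌋, ?_⟩
    field_simp at he
    exact_mod_cast he
  have h1 := Int.ceil_le_floor_add_one ((a : ℝ) / q)
  have h2 : ⌊(a : ℝ) / q⌋ < ⌈(a : ℝ) / q⌉ :=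
    Int.lt_ceil.mpr (lt_of_le_of_ne (Int.floor_le _) (Ne.symm hne))
  omega

lemma fstar_int_sub (n : ℤ) (x : ℝ) (h : ⌈x⌉ = ⌊x⌋ + 1) :
    fstar ((n : ℝ) - x) = n - fstar x - 1 := by
  unfold fstar
  rw [show (n : ℝ) - x = -x + n by ring, Int.ceil_add_intCast, Int.ceil_neg]
  omega

/-- For `p ≥ 2` and relatively prime positive integers `p₁, q₁` with `p·q₁ − p₁ > 0`,
for every `j` with `1 < j < q₁` we have `s_j(q₁/(p·q₁−p₁)) = p − s_j(q₁/p₁)`,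
where `s_j(q/p') = ⌊j·p'/q⌋_* − ⌊(j−1)·p'/q⌋_*`. -/
theorem sseq_middle_terms (p p₁ q₁ : ℤ) (hp : 2 ≤ p) (hp₁ : 0 < p₁) (hq₁ : 0 < q₁)
    (hcop : IsCoprime p₁ q₁) (hpos : 0 < p * q₁ - p₁) :
    ∀ j : ℤ, 1 < j → j < q₁ →
      fstar ((j : ℝ) * ((p * q₁ - p₁ : ℤ) : ℝ) / (q₁ : ℝ)) -
        fstar (((j : ℝ) - 1) * ((p * q₁ - p₁ : ℤ) : ℝ) / (q₁ : ℝ)) =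
      p - (fstar ((j : ℝ) * (p₁ : ℝ) / (q₁ : ℝ)) -
        fstar (((j : ℝ) - 1) * (p₁ : ℝ) / (q₁ : ℝ))) := by
  intro j hj1 hj2
  have hq' : (q₁ : ℝ) ≠ 0 := by exact_mod_cast hq₁.ne'
  have hdvd : ∀ k : ℤ, 0 < k → k < q₁ → ¬ q₁ ∣ k * p₁ := by
    intro k hk0 hkq hd
    have hk : q₁ ∣ k := hcop.symm.dvd_of_dvd_mul_right hd
    have := Int.le_of_dvd hk0 hk
    omega
  have hda := hdvd j (by omega) hj2
  have hdb := hdvd (j - 1) (by omega) (by omega)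
  have hca := ceil_div_of_not_dvd (j * p₁) q₁ hq₁ hda
  have hcb := ceil_div_of_not_dvd ((j - 1) * p₁) q₁ hq₁ hdb
  have e1 : (j : ℝ) * ((p * q₁ - p₁ : ℤ) : ℝ) / (q₁ : ℝ)
      = ((j * p : ℤ) : ℝ) - ((j * p₁ : ℤ) : ℝ) / q₁ := by
    push_cast; field_simp
  have e2 : ((j : ℝ) - 1) * ((p * q₁ - p₁ : ℤ) : ℝ) / (q₁ : ℝ)
      = (((j - 1) * p : ℤ) : ℝ) - (((j - 1) * p₁ : ℤ) : ℝ) / q₁ := by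
    push_cast; field_simp
  have e3 : (j : ℝ) * (p₁ : ℝ) / (q₁ : ℝ) = ((j * p₁ : ℤ) : ℝ) / q₁ := by push_cast; ring
  have e4 : ((j : ℝ) - 1) * (p₁ : ℝ) / (q₁ : ℝ) = (((j - 1) * p₁ : ℤ) : ℝ) / q₁ := by
    push_cast; ring
  rw [e1, e2, e3, e4, fstar_int_sub _ _ hca, fstar_int_sub _ _ hcb]
  ring
end

section
/- Let p ≥ 2 be an integer and let p₁, q₁ be relatively prime positive integers with pq₁ − p₁ > 0 and q₁ ≥ 2. Define s_j(q/p') = ⌊jp'/q⌋_* − ⌊(j−1)p'/q⌋_*. Then s_1(q₁/(pq₁−p₁)) = p − s_1(q₁/p₁) + 1. -/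
/-- For `p ≥ 2` and relatively prime positive integers `p₁, q₁` with `p·q₁ − p₁ > 0`
and `q₁ ≥ 2`, we have `s_1(q₁/(p·q₁−p₁)) = p − s_1(q₁/p₁) + 1`,
where `s_j(q/p') = ⌊j·p'/q⌋_* − ⌊(j−1)·p'/q⌋_*`. -/
theorem sseq_first_term (p p₁ q₁ : ℤ) (hp : 2 ≤ p) (hp₁ : 0 < p₁) (hq₁ : 2 ≤ q₁)
    (hcop : IsCoprime p₁ q₁) (hpos : 0 < p * q₁ - p₁) :
    fstar ((1 : ℝ) * ((p * q₁ - p₁ : ℤ) : ℝ) / (q₁ : ℝ)) -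
      fstar (((1 : ℝ) - 1) * ((p * q₁ - p₁ : ℤ) : ℝ) / (q₁ : ℝ)) =
    p - (fstar ((1 : ℝ) * (p₁ : ℝ) / (q₁ : ℝ)) -
      fstar (((1 : ℝ) - 1) * (p₁ : ℝ) / (q₁ : ℝ))) + 1 := by
  have hq0 : (0 : ℝ) < (q₁ : ℝ) := by exact_mod_cast lt_of_lt_of_le (by norm_num) hq₁
  set x : ℝ := (p₁ : ℝ) / (q₁ : ℝ) with hx
  -- x is not an integer
  have hne : x ≠ (⌊x⌋ : ℝ) := by
    intro h
    have hdvd : q₁ ∣ p₁ := ⟨⌊x⌋, by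
      have : (p₁ : ℝ) = (q₁ : ℝ) * (⌊x⌋ : ℝ) := by
        rw [← h, hx]; field_simp
      exact_mod_cast this⟩
    have : IsUnit q₁ := hcop.isUnit_of_dvd' hdvd dvd_rfl
    rw [Int.isUnit_iff] at this
    omega
  have hfl : (⌊x⌋ : ℝ) < x := lt_of_le_of_ne (Int.floor_le x) (Ne.symm hne)
  have hceil : ⌈x⌉ = ⌊x⌋ + 1 := by
    have h1 : ⌊x⌋ < ⌈x⌉ := by
      have := lt_of_lt_of_le hfl (Int.le_ceil x)
      exact_mod_cast this
    have h2 := Int.ceil_le_floor_add_one x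
    omega
  have hkey : ((p * q₁ - p₁ : ℤ) : ℝ) / (q₁ : ℝ) = -x + (p : ℝ) := by
    rw [hx]
    field_simp
    push_cast
    ring
  have hc2 : ⌈((p * q₁ - p₁ : ℤ) : ℝ) / (q₁ : ℝ)⌉ = -⌊x⌋ + p := by
    rw [hkey, Int.ceil_add_intCast, Int.ceil_neg]
  simp only [fstar, one_mul, sub_self, zero_mul, zero_div, Int.ceil_zero, hc2, hceil]
  simp only [← hx, hceil]
  ring
end

section
/- Let p ≥ 2 be an integer and let p₁, q₁ be relatively prime positive integers with pq₁ − p₁ > 0 and q₁ ≥ 2. Define s_j(q/p') = ⌊jp'/q⌋_* − ⌊(j−1)p'/q⌋_*. Then s_{q₁}(q₁/(pq₁−p₁)) = p − s_{q₁}(q₁/p₁) − 1. -/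
lemma floor_int_div_real (a q : ℤ) (hq : 0 < q) : ⌊(a : ℝ) / (q : ℝ)⌋ = a / q := by
  have hq0 : (0 : ℝ) < (q : ℝ) := by exact_mod_cast hq
  rw [Int.floor_eq_iff]
  constructor
  · rw [le_div_iff₀ hq0]
    exact_mod_cast Int.ediv_mul_le a hq.ne'
  · rw [div_lt_iff₀ hq0]
    exact_mod_cast Int.lt_ediv_add_one_mul_self a hq

lemma ceil_int_div_real (a q : ℤ) (hq : 0 < q) : ⌈(a : ℝ) / (q : ℝ)⌉ = -((-a) / q) := by
  have h : ⌊-((a : ℝ) / (q : ℝ))⌋ = -⌈(a : ℝ) / (q : ℝ)⌉ := Int.floor_neg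
  have h2 : -((a : ℝ) / (q : ℝ)) = ((-a : ℤ) : ℝ) / (q : ℝ) := by push_cast; ring
  rw [h2, floor_int_div_real _ _ hq] at h
  omega

/-- The last S-sequence term equals `m / q` (integer division). -/
lemma sterm_eq (m q : ℤ) (hq : 0 < q) :
    fstar ((q : ℝ) * (m : ℝ) / (q : ℝ)) - fstar (((q : ℝ) - 1) * (m : ℝ) / (q : ℝ)) =
    m / q := by
  have hq0 : (q : ℝ) ≠ 0 := by positivity
  have h1 : (q : ℝ) * (m : ℝ) / (q : ℝ) = (m : ℝ) := by field_simp
  have h2 : ((q : ℝ) - 1) * (m : ℝ) / (q : ℝ) = ((((q - 1) * m : ℤ)) : ℝ) / (q : ℝ) := by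
    push_cast; ring
  rw [fstar, fstar, h1, h2, Int.ceil_intCast, ceil_int_div_real _ _ hq]
  have : (-((q - 1) * m)) / q = m / q - m := by
    have : (-((q - 1) * m)) = m + q * (-m) := by ring
    rw [this, Int.add_mul_ediv_left _ _ hq.ne']; omega
  rw [this]; ring

/-- For `p ≥ 2` and relatively prime positive integers `p₁, q₁` with `p·q₁ − p₁ > 0`
and `q₁ ≥ 2`, we have `s_{q₁}(q₁/(p·q₁−p₁)) = p − s_{q₁}(q₁/p₁) − 1`,
where `s_j(q/p') = ⌊j·p'/q⌋_* − ⌊(j−1)·p'/q⌋_*`. -/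
theorem sseq_last_term (p p₁ q₁ : ℤ) (hp : 2 ≤ p) (hp₁ : 0 < p₁) (hq₁ : 2 ≤ q₁)
    (hcop : IsCoprime p₁ q₁) (hpos : 0 < p * q₁ - p₁) :
    fstar ((q₁ : ℝ) * ((p * q₁ - p₁ : ℤ) : ℝ) / (q₁ : ℝ)) -
      fstar (((q₁ : ℝ) - 1) * ((p * q₁ - p₁ : ℤ) : ℝ) / (q₁ : ℝ)) =
    p - (fstar ((q₁ : ℝ) * (p₁ : ℝ) / (q₁ : ℝ)) -
      fstar (((q₁ : ℝ) - 1) * (p₁ : ℝ) / (q₁ : ℝ))) - 1 := by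
  have hq : 0 < q₁ := by omega
  have h1 := sterm_eq (p * q₁ - p₁) q₁ hq
  have h2 := sterm_eq p₁ q₁ hq
  push_cast
  push_cast at h1
  rw [h1, h2]
  -- it remains to show `(p * q₁ - p₁) / q₁ = p - p₁ / q₁ - 1`
  have hndvd : ¬ q₁ ∣ p₁ := by
    intro hdvd
    have := Int.isUnit_iff.mp (hcop.isUnit_of_dvd' hdvd dvd_rfl)
    omega
  have hr0 : p₁ % q₁ ≠ 0 := fun h => hndvd (Int.dvd_of_emod_eq_zero h)
  have hrlt : p₁ % q₁ < q₁ := Int.emod_lt_of_pos _ hq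
  have hrpos : 0 < p₁ % q₁ := lt_of_le_of_ne (Int.emod_nonneg _ hq.ne') (Ne.symm hr0)
  have hkey : (-p₁) / q₁ = -(p₁ / q₁) - 1 := by
    have hdecomp : -p₁ = (q₁ - p₁ % q₁) + q₁ * (-(p₁ / q₁) - 1) := by
      have := Int.emod_add_mul_ediv p₁ q₁; linarith [this]
    rw [hdecomp, Int.add_mul_ediv_left _ _ hq.ne',
      Int.ediv_eq_zero_of_lt (by omega) (by omega), zero_add]
  have : (p * q₁ - p₁) / q₁ = p - p₁ / q₁ - 1 := by
    have : p * q₁ - p₁ = -p₁ + q₁ * p := by ring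
    rw [this, Int.add_mul_ediv_left _ _ hq.ne', hkey]; ring
  omega
end
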